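/- Let (G, L) be a graft on a finite vertex set and let v ∈ L. Then the corank over GF(2) of the adjacency matrix A_{(G,L)} equals the corank over GF(2) of the adjacency matrix A_{(G,L) ⊟ v} of the graft obtained by local complementation deletion at v. -/

import Mathlib

open Matrix Module

section Aux

/-- `p.prod q` is linearly equivalent to `p × q`. -/
def subProdEquiv {K M N : Type*} [Ring K] [AddCommGroup M] [AddCommGroup N]
    [Module K M] [Module K N] (p : Submodule K M) (q : Submodule K N) :
    (p.prod q) ≃ₗ[K] p × q where
  toFun x := (⟨x.1.1, x.2.1⟩, ⟨x.1.2, x.2.2⟩)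
  invFun x := ⟨(↑x.1, ↑x.2), ⟨x.1.2, x.2.2⟩⟩
  map_add' _ _ := rfl
  map_smul' _ _ := rfl
  left_inv _ := rfl
  right_inv _ := rfl

lemma finrank_prod_sub {K M N : Type*} [DivisionRing K] [AddCommGroup M] [AddCommGroup N]
    [Module K M] [Module K N] [FiniteDimensional K M] [FiniteDimensional K N]
    (p : Submodule K M) (q : Submodule K N) :
    finrank K (p.prod q) = finrank K p + finrank K q := by
  rw [(subProdEquiv p q).finrank_eq, Module.finrank_prod]

lemma range_prodMap' {K M N M' N' : Type*} [CommRing K] [AddCommGroup M] [AddCommGroup N]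
    [AddCommGroup M'] [AddCommGroup N'] [Module K M] [Module K N] [Module K M'] [Module K N']
    (f : M →ₗ[K] M') (g : N →ₗ[K] N') :
    LinearMap.range (f.prodMap g) = (LinearMap.range f).prod (LinearMap.range g) := by
  ext ⟨a, b⟩
  simp only [LinearMap.mem_range, Submodule.mem_prod, LinearMap.prodMap_apply, Prod.mk.injEq]
  constructor
  · rintro ⟨⟨x, y⟩, hx, hy⟩; exact ⟨⟨x, hx⟩, ⟨y, hy⟩⟩
  · rintro ⟨⟨x, hx⟩, ⟨y, hy⟩⟩; exact ⟨(x, y), hx, hy⟩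

lemma rank_fromBlocks_diag {K m n : Type*} [Field K] [Fintype m] [Fintype n]
    [DecidableEq m] [DecidableEq n] (A : Matrix m m K) (D : Matrix n n K) :
    (fromBlocks A 0 0 D).rank = A.rank + D.rank := by
  classical
  set e := LinearEquiv.sumArrowLequivProdArrow m n K K
  have key : (fromBlocks A 0 0 D).mulVecLin
      = e.symm.toLinearMap ∘ₗ (A.mulVecLin.prodMap D.mulVecLin) ∘ₗ e.toLinearMap := by
    apply LinearMap.ext; intro x
    funext i
    cases i with
    | inl i =>
        simp [e, Matrix.fromBlocks_mulVec, LinearEquiv.sumArrowLequivProdArrow,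
          Matrix.mulVecLin_apply, Equiv.sumArrowEquivProdArrow]
    | inr i =>
        simp [e, Matrix.fromBlocks_mulVec, LinearEquiv.sumArrowLequivProdArrow,
          Matrix.mulVecLin_apply, Equiv.sumArrowEquivProdArrow]
  rw [Matrix.rank, key]
  rw [LinearMap.range_comp, LinearMap.range_comp, LinearEquiv.range, Submodule.map_top,
    LinearEquiv.finrank_map_eq, range_prodMap', finrank_prod_sub]
  rfl

end Aux


open scoped Classical symmDiff

/-- Local complementation of a simple graph at a vertex `v`: toggle the adjacency
between every pair of distinct neighbours of `v`. -/
def SimpleGraph.localComp {V : Type*} (G : SimpleGraph V) (v : V) : SimpleGraph V where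
  Adj u w := u ≠ w ∧ (Xor' (G.Adj u w) (G.Adj v u ∧ G.Adj v w))
  symm := by
    constructor
    rintro u w ⟨h1, h2⟩
    refine ⟨h1.symm, ?_⟩
    rw [G.adj_comm w u, and_comm]
    exact h2
  loopless := ⟨by intro u h; exact h.1 rfl⟩

/-- Local complementation deletion `G ⊟ v`, keeping the ambient vertex type
(the deleted vertex becomes isolated). -/
def SimpleGraph.lcdel {V : Type*} (G : SimpleGraph V) (v : V) : SimpleGraph V where
  Adj u w := u ≠ v ∧ w ≠ v ∧ (G.localComp v).Adj u w
  symm := ⟨by intro u w h; exact ⟨h.2.1, h.1, (G.localComp v).adj_symm h.2.2⟩⟩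
  loopless := ⟨by intro u h; exact (G.localComp v).irrefl h.2.2⟩

/-- A graft: a simple graph whose edges lie inside a finite support, together with
a marked set of vertices `L ⊆ support`. -/
structure Graft (V : Type*) where
  support : Finset V
  G : SimpleGraph V
  edge_mem : ∀ ⦃u w : V⦄, G.Adj u w → u ∈ support
  L : Finset V
  L_sub : L ⊆ support

variable {V : Type*} [Fintype V] [DecidableEq V]

/-- Local complementation deletion of a graft at a vertex:
`(G, L) ⊟ v = (G ⊟ v, (L \ {v}) ∆ N_G(v))`. -/
noncomputable def Graft.lcd (Γ : Graft V) (v : V) : Graft V where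
  support := Γ.support.erase v
  G := Γ.G.lcdel v
  edge_mem := by
    intro u w h
    obtain ⟨hu, hw, hne, hx⟩ := h
    refine Finset.mem_erase.mpr ⟨hu, ?_⟩
    rcases (hx : (Γ.G.Adj u w ∧ ¬(Γ.G.Adj v u ∧ Γ.G.Adj v w)) ∨
        ((Γ.G.Adj v u ∧ Γ.G.Adj v w) ∧ ¬Γ.G.Adj u w)) with ⟨ha, -⟩ | ⟨⟨hv1, -⟩, -⟩
    · exact Γ.edge_mem ha
    · exact Γ.edge_mem (Γ.G.adj_symm hv1)
  L := (Γ.L.erase v) ∆ (Finset.univ.filter fun u => Γ.G.Adj v u)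
  L_sub := by
    intro u hu
    rw [Finset.mem_symmDiff] at hu
    refine Finset.mem_erase.mpr ?_
    rcases hu with ⟨h1, -⟩ | ⟨h2, -⟩
    · exact ⟨(Finset.mem_erase.mp h1).1, Γ.L_sub (Finset.mem_erase.mp h1).2⟩
    · have hadj : Γ.G.Adj v u := (Finset.mem_filter.mp h2).2
      exact ⟨fun h => Γ.G.irrefl (h ▸ hadj), Γ.edge_mem (Γ.G.adj_symm hadj)⟩

/-- `Δ` is a local complementation minor of `Γ`: it is obtained from `Γ` by a
finite sequence of local complementation deletions, each performed at a vertex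
of the current mark set. -/
inductive Graft.IsLCMinor : Graft V → Graft V → Prop
  | refl (Γ : Graft V) : Graft.IsLCMinor Γ Γ
  | step {Γ Δ : Graft V} (v : V) (hv : v ∈ Γ.L) :
      Graft.IsLCMinor (Γ.lcd v) Δ → Graft.IsLCMinor Γ Δ

/-- The adjacency matrix over GF(2) of a graft, indexed by its support. -/
noncomputable def Graft.matrix (Γ : Graft V) :
    Matrix Γ.support Γ.support (ZMod 2) := fun u w =>
  if (u : V) = (w : V) then (if (u : V) ∈ Γ.L then 1 else 0)
  else (if Γ.G.Adj (u : V) (w : V) then 1 else 0)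

/-- The corank over GF(2) of the adjacency matrix of a graft. -/
noncomputable def Graft.corank (Γ : Graft V) : ℕ :=
  Γ.support.card - Γ.matrix.rank

/-- Local complementation deletion at a marked vertex preserves the corank over
GF(2) of the adjacency matrix of a graft. -/
theorem corank_lcd_eq {V : Type*} [Fintype V] [DecidableEq V]
    (Γ : Graft V) (v : V) (hv : v ∈ Γ.L) :
    Γ.corank = (Γ.lcd v).corank := by
  classical
  have hvS : v ∈ Γ.support := Γ.L_sub hv
  set T : Finset V := Γ.support.erase v with hT
  let e : Unit ⊕ {x // x ∈ T} ≃ {x // x ∈ Γ.support} :=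
  { toFun := Sum.elim (fun _ => ⟨v, hvS⟩)
      (fun u => ⟨u.1, Finset.mem_of_mem_erase u.2⟩),
    invFun := fun x => if h : (x : V) = v then Sum.inl ()
      else Sum.inr ⟨x.1, Finset.mem_erase.mpr ⟨h, x.2⟩⟩,
    left_inv := by
      rintro (⟨⟩ | u)
      · simp
      · have h : (u : V) ≠ v := (Finset.mem_erase.mp u.2).1
        simp [h],
    right_inv := by
      rintro ⟨x, hx⟩
      by_cases h : x = v
      · subst h; simp
      · simp [h] }
  let B1 : Matrix Unit {x // x ∈ T} (ZMod 2) := fun _ u => if Γ.G.Adj v u then 1 else 0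
  let C1 : Matrix {x // x ∈ T} Unit (ZMod 2) := fun u _ => if Γ.G.Adj u v then 1 else 0
  let D1 : Matrix {x // x ∈ T} {x // x ∈ T} (ZMod 2) := fun u w =>
    if (u : V) = (w : V) then (if (u : V) ∈ Γ.L then 1 else 0)
    else (if Γ.G.Adj u w then 1 else 0)
  have hMA : Γ.matrix.submatrix e e = fromBlocks 1 B1 C1 D1 := by
    ext i j
    rcases i with i | u <;> rcases j with j | w
    · simp [Graft.matrix, Graft.lcd, hv, Matrix.one_apply, e, Matrix.submatrix, fromBlocks]
    · have h : v ≠ (w : V) := fun h => (Finset.mem_erase.mp w.2).1 h.symm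
      simp [Graft.matrix, h, e, Matrix.submatrix, fromBlocks, B1] <;> congr
    · have h : (u : V) ≠ v := (Finset.mem_erase.mp u.2).1
      simp [Graft.matrix, h, e, Matrix.submatrix, fromBlocks, C1] <;> congr
    · simp [Graft.matrix, e, Matrix.submatrix, fromBlocks, D1] <;> congr
  haveI : Invertible (1 : Matrix Unit Unit (ZMod 2)) := invertibleOne
  have hfac := Matrix.fromBlocks_eq_of_invertible₁₁ (1 : Matrix Unit Unit (ZMod 2)) B1 C1 D1
  rw [invOf_one, Matrix.mul_one, Matrix.one_mul] at hfac
  set S0 : Matrix {x // x ∈ T} {x // x ∈ T} (ZMod 2) := D1 - C1 * B1 with hS0def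
  have hdetU : IsUnit (Matrix.fromBlocks (1 : Matrix Unit Unit (ZMod 2)) 0 C1 1).det := by
    rw [Matrix.det_fromBlocks_zero₁₂]; simp
  have hdetW : IsUnit (Matrix.fromBlocks (1 : Matrix Unit Unit (ZMod 2)) B1 0 1).det := by
    rw [Matrix.det_fromBlocks_zero₂₁]; simp
  have hrank : Γ.matrix.rank = 1 + S0.rank := by
    rw [← Matrix.rank_submatrix Γ.matrix e e, hMA, hfac,
      Matrix.rank_mul_eq_left_of_isUnit_det _ _ hdetW,
      Matrix.rank_mul_eq_right_of_isUnit_det _ _ hdetU,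
      rank_fromBlocks_diag, Matrix.rank_one]
    simp
  have hS0 : S0 = (Γ.lcd v).matrix := by
    ext u w
    have huv : (u : V) ≠ v := (Finset.mem_erase.mp u.2).1
    have hwv : (w : V) ≠ v := (Finset.mem_erase.mp w.2).1
    have hCB : (C1 * B1) u w
        = (if Γ.G.Adj u v then 1 else 0) * (if Γ.G.Adj v w then (1 : ZMod 2) else 0) := by
      rw [Matrix.mul_apply]; simp [C1, B1]
    have hsub : S0 u w = D1 u w - (C1 * B1) u w := rfl
    have hlc : ∀ a b : V, (Γ.G.lcdel v).Adj a b ↔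
        (a ≠ v ∧ b ≠ v ∧ (a ≠ b ∧ Xor' (Γ.G.Adj a b) (Γ.G.Adj v a ∧ Γ.G.Adj v b))) :=
      fun _ _ => Iff.rfl
    have huvadj : Γ.G.Adj (u : V) v ↔ Γ.G.Adj v (u : V) := Γ.G.adj_comm _ _
    by_cases h : (u : V) = (w : V)
    · have hvw : Γ.G.Adj v (w : V) ↔ Γ.G.Adj v (u : V) := by rw [h]
      rw [hsub, hCB]
      simp only [D1]
      rw [if_pos h]
      show _ = (if (u : V) = (w : V) then (if (u : V) ∈ (Γ.lcd v).L then (1 : ZMod 2) else 0)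
        else (if (Γ.lcd v).G.Adj (u : V) (w : V) then 1 else 0))
      rw [if_pos h]
      by_cases hL : (u : V) ∈ Γ.L <;> by_cases ha : Γ.G.Adj v (u : V) <;>
        simp [Graft.lcd, Finset.mem_symmDiff, Finset.mem_erase, Finset.mem_filter,
          huvadj, hvw, hL, ha, huv] <;> decide
    · by_cases h1 : Γ.G.Adj (u : V) (w : V) <;> by_cases h2 : Γ.G.Adj v (u : V) <;>
        by_cases h3 : Γ.G.Adj v (w : V) <;>
        simp [hsub, hCB, Graft.matrix, Graft.lcd, D1, h, h1, h2, h3, huv, hwv,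
          hlc, Xor', huvadj, Subtype.coe_ne_coe.mp h] <;> decide
  have hrank2 : Γ.matrix.rank = 1 + (Γ.lcd v).matrix.rank := by rw [hrank, hS0]; congr
  have hcard : (Γ.lcd v).support.card = Γ.support.card - 1 := Finset.card_erase_of_mem hvS
  unfold Graft.corank
  rw [hrank2, hcard]
  omega
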